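/- For distinct transactions 1, 2, 3 and distinct variables x, y, the valued history h4 = [wr_1(x,5), wr_2(x,5), wr_1(y,42), wr_2(y,43), cmt_1, rd_3(x,5), cmt_2, rd_3(y,43), cmt_3] is value-opaque, witnessed by the sequential legal history putting transaction 1 before transaction 2 before transaction 3; but h4 is not opaque under the conflict-based definition (i.e., the history obtained from h4 by erasing all values is not opaque), since the conflicts force transaction 2 before transaction 3 (from cmt_2 and the global read rd_3(y)) as well as transaction 3 before transaction 2 (from the global read rd_3(x) and cmt_2). -/

import Mathlib

/-- Statements of the conflict-based setting: reads, writes (without values),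
commits and aborts, each tagged with a transaction identifier (a positive natural). -/
inductive Stmt : Type where
  | rd (t : ℕ+) (x : ℕ)
  | wr (t : ℕ+) (x : ℕ)
  | cmt (t : ℕ+)
  | abrt (t : ℕ+)
  deriving DecidableEq

/-- The transaction identifier of a statement. -/
def Stmt.txn : Stmt → ℕ+
  | .rd t _ => t
  | .wr t _ => t
  | .cmt t => t
  | .abrt t => t

/-- The variable mentioned by a statement, if any. -/
def Stmt.var? : Stmt → Option ℕ
  | .rd _ x => some x
  | .wr _ x => some x
  | _ => none

/-- Projection of a history onto a transaction. -/
def proj (h : List Stmt) (t : ℕ+) : List Stmt :=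
  h.filter (fun s => s.txn = t)

/-- Transaction `t` occurs in `h`. -/
def occurs (h : List Stmt) (t : ℕ+) : Prop := proj h t ≠ []

/-- Transaction `t` is committing in `h`. -/
def committing (h : List Stmt) (t : ℕ+) : Prop :=
  (proj h t).getLast? = some (Stmt.cmt t)

/-- Transaction `t` is aborting in `h`. -/
def aborting (h : List Stmt) (t : ℕ+) : Prop :=
  (proj h t).getLast? = some (Stmt.abrt t)

/-- Transaction `t` is finished in `h`. -/
def finished (h : List Stmt) (t : ℕ+) : Prop :=
  committing h t ∨ aborting h t

/-- Transaction `t` is live in `h`: it occurs but is not finished. -/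
def live (h : List Stmt) (t : ℕ+) : Prop := occurs h t ∧ ¬ finished h t

/-- `t1 <_h t2`: both occur and every statement of `t1` occurs strictly before
every statement of `t2` (equivalently, the last statement of `t1` is before the
first statement of `t2`). -/
def precedes (h : List Stmt) (t1 t2 : ℕ+) : Prop :=
  occurs h t1 ∧ occurs h t2 ∧
  ∀ (i j : ℕ) (s1 s2 : Stmt), h[i]? = some s1 → h[j]? = some s2 →
    s1.txn = t1 → s2.txn = t2 → i < j

/-- A history is sequential if any two distinct occurring transactions are
comparable under `<_h`. -/
def sequential (h : List Stmt) : Prop :=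
  ∀ t1 t2, t1 ≠ t2 → occurs h t1 → occurs h t2 →
    precedes h t1 t2 ∨ precedes h t2 t1

/-- Transaction `t` writes to variable `x` in `h`. -/
def writes (h : List Stmt) (t : ℕ+) (x : ℕ) : Prop := Stmt.wr t x ∈ h

/-- The occurrence at position `i` in `h` is a global read `rd_t(x)`:
no `wr_t(x)` occurs before it. -/
def globalRead (h : List Stmt) (i : ℕ) (t : ℕ+) (x : ℕ) : Prop :=
  h[i]? = some (Stmt.rd t x) ∧ ∀ j, j < i → h[j]? ≠ some (Stmt.wr t x)

/-- The statement occurrences at positions `i` and `j` of `h` (belonging to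
distinct transactions) are in conflict. -/
def conflict (h : List Stmt) (i j : ℕ) : Prop :=
  ∃ t1 t2, t1 ≠ t2 ∧
    ((∃ x, globalRead h i t1 x ∧ h[j]? = some (Stmt.cmt t2) ∧ writes h t2 x) ∨
     (∃ x, globalRead h j t1 x ∧ h[i]? = some (Stmt.cmt t2) ∧ writes h t2 x) ∨
     (h[i]? = some (Stmt.cmt t1) ∧ h[j]? = some (Stmt.cmt t2) ∧
      ∃ x, writes h t1 x ∧ writes h t2 x))

/-- Position `i` of `h` and position `i'` of `h'` carry the same statement `s`,
and it is in both cases the same (`k`-th) occurrence of `s`. -/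
def corresponds (h h' : List Stmt) (i i' : ℕ) : Prop :=
  ∃ s, h[i]? = some s ∧ h'[i']? = some s ∧
    (h.take i).count s = (h'.take i').count s

/-- `h'` is strictly equivalent to `h`: it is a rearrangement with the same
per-transaction projections, preserving the real-time order of finished
transactions and the relative order of conflicting statement occurrences. -/
def strictEquiv (h h' : List Stmt) : Prop :=
  h.Perm h' ∧
  (∀ t, proj h t = proj h' t) ∧
  (∀ t1 t2, t1 ≠ t2 → precedes h t1 t2 → finished h t1 → precedes h' t1 t2) ∧
  (∀ i j i' j', i < j → conflict h i j →
     corresponds h h' i i' → corresponds h h' j j' → i' < j')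

/-- A history is opaque if some sequential history is strictly equivalent to it. -/
def IsOpaque (h : List Stmt) : Prop :=
  ∃ h', sequential h' ∧ strictEquiv h h'

/-- Statements of the value-based setting: reads and writes carry a value. -/
inductive VStmt : Type where
  | rd (t : ℕ+) (x : ℕ) (v : ℕ)
  | wr (t : ℕ+) (x : ℕ) (v : ℕ)
  | cmt (t : ℕ+)
  | abrt (t : ℕ+)
  deriving DecidableEq

/-- The transaction identifier of a valued statement. -/
def VStmt.txn : VStmt → ℕ+
  | .rd t _ _ => t
  | .wr t _ _ => t
  | .cmt t => t
  | .abrt t => t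

/-- Erasing the value from a valued statement. -/
def VStmt.erase : VStmt → Stmt
  | .rd t x _ => Stmt.rd t x
  | .wr t x _ => Stmt.wr t x
  | .cmt t => Stmt.cmt t
  | .abrt t => Stmt.abrt t

/-- Erasing all values from a valued history. -/
def eraseH (h : List VStmt) : List Stmt := h.map VStmt.erase

/-- Projection of a valued history onto a transaction. -/
def vProj (h : List VStmt) (t : ℕ+) : List VStmt :=
  h.filter (fun s => s.txn = t)

def vOccurs (h : List VStmt) (t : ℕ+) : Prop := vProj h t ≠ []

def vCommitting (h : List VStmt) (t : ℕ+) : Prop :=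
  (vProj h t).getLast? = some (VStmt.cmt t)

def vAborting (h : List VStmt) (t : ℕ+) : Prop :=
  (vProj h t).getLast? = some (VStmt.abrt t)

def vFinished (h : List VStmt) (t : ℕ+) : Prop :=
  vCommitting h t ∨ vAborting h t

def vPrecedes (h : List VStmt) (t1 t2 : ℕ+) : Prop :=
  vOccurs h t1 ∧ vOccurs h t2 ∧
  ∀ (i j : ℕ) (s1 s2 : VStmt), h[i]? = some s1 → h[j]? = some s2 →
    s1.txn = t1 → s2.txn = t2 → i < j

def vSequential (h : List VStmt) : Prop :=
  ∀ t1 t2, t1 ≠ t2 → vOccurs h t1 → vOccurs h t2 →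
    vPrecedes h t1 t2 ∨ vPrecedes h t2 t1

/-- Transaction `t` writes to `x` in the valued history `h`. -/
def vWrites (h : List VStmt) (t : ℕ+) (x : ℕ) : Prop :=
  ∃ v, VStmt.wr t x v ∈ h

/-- The occurrence at position `i` in `h` is a global read `rd_t(x,v)`. -/
def vGlobalRead (h : List VStmt) (i : ℕ) (t : ℕ+) (x : ℕ) (v : ℕ) : Prop :=
  h[i]? = some (VStmt.rd t x v) ∧ ∀ (j : ℕ) (v' : ℕ), j < i → h[j]? ≠ some (VStmt.wr t x v')

/-- The last write of transaction `t` to variable `x` in `h` has value `v`. -/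
def lastWrite (h : List VStmt) (t : ℕ+) (x : ℕ) (v : ℕ) : Prop :=
  ∃ i, h[i]? = some (VStmt.wr t x v) ∧
    ∀ (j : ℕ) (v' : ℕ), i < j → h[j]? ≠ some (VStmt.wr t x v')

/-- `t'` is a `<_h`-maximal committing transaction preceding `t` that writes to `x`. -/
def maxCommittingWriter (h : List VStmt) (t : ℕ+) (x : ℕ) (t' : ℕ+) : Prop :=
  vCommitting h t' ∧ vPrecedes h t' t ∧ vWrites h t' x ∧
  ∀ t'', vCommitting h t'' → vPrecedes h t'' t → vWrites h t'' x →
    t'' = t' ∨ vPrecedes h t'' t'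

/-- A sequential valued history is legal: every global read `rd_t(x,v)` returns
the value of the last write to `x` of the `<_h`-maximal committing transaction
preceding `t` writing to `x`, and `0` if no such transaction exists. -/
def vLegal (h : List VStmt) : Prop :=
  ∀ i t x v, vGlobalRead h i t x v →
    (∀ t', maxCommittingWriter h t x t' → ∀ v', lastWrite h t' x v' → v = v') ∧
    ((¬ ∃ t', vCommitting h t' ∧ vPrecedes h t' t ∧ vWrites h t' x) → v = 0)

/-- Value-equivalence of valued histories. -/
def valueEquiv (h h' : List VStmt) : Prop :=
  (∀ t, vProj h t = vProj h' t) ∧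
  (∀ t1 t2, t1 ≠ t2 → vPrecedes h t1 t2 → vFinished h t1 → vPrecedes h' t1 t2)

/-- A valued history is value-opaque if some sequential legal valued history is
value-equivalent to it. -/
def ValueOpaque (h : List VStmt) : Prop :=
  ∃ h', vSequential h' ∧ vLegal h' ∧ valueEquiv h h'

-- ===== Auxiliary material =====
namespace H4Aux

lemma mem_of_getElem?' {α} (l : List α) (i : ℕ) (a : α) (h : l[i]? = some a) : a ∈ l := by
  have hi : i < l.length := (List.getElem?_eq_some_iff.1 h).1
  rw [List.getElem?_eq_getElem hi] at h
  exact (Option.some.inj h) ▸ List.getElem_mem hi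

lemma exists_getElem?' {α} (a : α) (l : List α) (h : a ∈ l) : ∃ n : ℕ, l[n]? = some a := by
  obtain ⟨n, hn, he⟩ := List.getElem_of_mem h
  exact ⟨n, by rw [List.getElem?_eq_getElem hn, he]⟩

lemma count_take_zero {α} [DecidableEq α] (l : List α) (i : ℕ) (s : α)
    (h : l[i]? = some s) (h1 : l.count s = 1) : (l.take i).count s = 0 := by
  have hi : i < l.length := (List.getElem?_eq_some_iff.1 h).1
  have hd : l.drop i = s :: l.drop (i+1) := by
    rw [List.drop_eq_getElem_cons hi]
    have h2 := List.getElem?_eq_getElem hi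
    rw [h2] at h
    simp_all
  have hc := List.count_append (a := s) (l₁ := l.take i) (l₂ := l.drop i)
  rw [List.take_append_drop, hd] at hc
  simp [List.count_cons] at hc
  omega

lemma vPrecedes_split (l1 l2 : List VStmt) (t1 t2 : ℕ+)
    (o1 : vOccurs (l1 ++ l2) t1) (o2 : vOccurs (l1 ++ l2) t2)
    (h1 : ∀ s ∈ l2, s.txn ≠ t1) (h2 : ∀ s ∈ l1, s.txn ≠ t2) :
    vPrecedes (l1 ++ l2) t1 t2 := by
  refine ⟨o1, o2, ?_⟩
  intro i j s1 s2 hi hj ht1 ht2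
  have hi' : i < l1.length := by
    by_contra hc
    push_neg at hc
    rw [List.getElem?_append_right hc] at hi
    exact h1 s1 (mem_of_getElem?' _ _ _ hi) ht1
  have hj' : l1.length ≤ j := by
    by_contra hc
    push_neg at hc
    rw [List.getElem?_append_left hc] at hj
    exact h2 s2 (mem_of_getElem?' _ _ _ hj) ht2
  omega

def hW (x y : ℕ) : List VStmt := [VStmt.wr 1 x 5, VStmt.wr 1 y 42, VStmt.cmt 1,
  VStmt.wr 2 x 5, VStmt.wr 2 y 43, VStmt.cmt 2,
  VStmt.rd 3 x 5, VStmt.rd 3 y 43, VStmt.cmt 3]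

def h4L (x y : ℕ) : List VStmt := [VStmt.wr 1 x 5, VStmt.wr 2 x 5, VStmt.wr 1 y 42,
  VStmt.wr 2 y 43, VStmt.cmt 1, VStmt.rd 3 x 5, VStmt.cmt 2,
  VStmt.rd 3 y 43, VStmt.cmt 3]

lemma occW1 (x y : ℕ) : vOccurs (hW x y) 1 := by
  simp [vOccurs, vProj, hW, VStmt.txn]
lemma occW2 (x y : ℕ) : vOccurs (hW x y) 2 := by
  simp [vOccurs, vProj, hW, VStmt.txn]
lemma occW3 (x y : ℕ) : vOccurs (hW x y) 3 := by
  simp [vOccurs, vProj, hW, VStmt.txn]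

lemma occW_cases (x y : ℕ) (t : ℕ+) (h : vOccurs (hW x y) t) : t = 1 ∨ t = 2 ∨ t = 3 := by
  by_contra hc
  push_neg at hc
  obtain ⟨h1, h2, h3⟩ := hc
  exact h (by simp [vProj, hW, VStmt.txn, Ne.symm h1, Ne.symm h2, Ne.symm h3])

lemma prec12 (x y : ℕ) : vPrecedes (hW x y) 1 2 := by
  have e : hW x y = [VStmt.wr 1 x 5, VStmt.wr 1 y 42, VStmt.cmt 1] ++
      [VStmt.wr 2 x 5, VStmt.wr 2 y 43, VStmt.cmt 2,
       VStmt.rd 3 x 5, VStmt.rd 3 y 43, VStmt.cmt 3] := rfl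
  rw [e]
  refine vPrecedes_split _ _ _ _ (e ▸ occW1 x y) (e ▸ occW2 x y) ?_ ?_ <;>
    (intro s hs; fin_cases hs <;> simp (config := { decide := true }) [VStmt.txn])

lemma prec13 (x y : ℕ) : vPrecedes (hW x y) 1 3 := by
  have e : hW x y = [VStmt.wr 1 x 5, VStmt.wr 1 y 42, VStmt.cmt 1] ++
      [VStmt.wr 2 x 5, VStmt.wr 2 y 43, VStmt.cmt 2,
       VStmt.rd 3 x 5, VStmt.rd 3 y 43, VStmt.cmt 3] := rfl
  rw [e]
  refine vPrecedes_split _ _ _ _ (e ▸ occW1 x y) (e ▸ occW3 x y) ?_ ?_ <;>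
    (intro s hs; fin_cases hs <;> simp (config := { decide := true }) [VStmt.txn])

lemma prec23 (x y : ℕ) : vPrecedes (hW x y) 2 3 := by
  have e : hW x y = [VStmt.wr 1 x 5, VStmt.wr 1 y 42, VStmt.cmt 1,
      VStmt.wr 2 x 5, VStmt.wr 2 y 43, VStmt.cmt 2] ++
      [VStmt.rd 3 x 5, VStmt.rd 3 y 43, VStmt.cmt 3] := rfl
  rw [e]
  refine vPrecedes_split _ _ _ _ (e ▸ occW2 x y) (e ▸ occW3 x y) ?_ ?_ <;>
    (intro s hs; fin_cases hs <;> simp (config := { decide := true }) [VStmt.txn])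

lemma seqW (x y : ℕ) : vSequential (hW x y) := by
  intro t1 t2 hne o1 o2
  rcases occW_cases x y t1 o1 with rfl | rfl | rfl <;>
    rcases occW_cases x y t2 o2 with rfl | rfl | rfl <;>
    first
      | exact absurd rfl hne
      | exact Or.inl (prec12 x y)
      | exact Or.inl (prec13 x y)
      | exact Or.inl (prec23 x y)
      | exact Or.inr (prec12 x y)
      | exact Or.inr (prec13 x y)
      | exact Or.inr (prec23 x y)

lemma not_prec21 (x y : ℕ) : ¬ vPrecedes (hW x y) 2 1 := by
  intro hp
  have := hp.2.2 3 0 (VStmt.wr 2 x 5) (VStmt.wr 1 x 5) rfl rfl rfl rfl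
  omega

lemma not_prec33 (x y : ℕ) : ¬ vPrecedes (hW x y) 3 3 := by
  intro hp
  have := hp.2.2 8 8 (VStmt.cmt 3) (VStmt.cmt 3) rfl rfl rfl rfl
  omega

lemma cmtW2 (x y : ℕ) : vCommitting (hW x y) 2 := by
  simp [vCommitting, vProj, hW, VStmt.txn]

lemma cmtW_occ (x y : ℕ) (t : ℕ+) (h : vCommitting (hW x y) t) : vOccurs (hW x y) t := by
  intro hn
  rw [vCommitting, hn] at h
  simp at h

lemma maxW (x y : ℕ) (z : ℕ) (t' : ℕ+) (hz : vWrites (hW x y) 2 z)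
    (h : maxCommittingWriter (hW x y) 3 z t') : t' = 2 := by
  obtain ⟨hc, hp, _, hmax⟩ := h
  rcases occW_cases x y t' (cmtW_occ x y t' hc) with rfl | rfl | rfl
  · rcases hmax 2 (cmtW2 x y) (prec23 x y) hz with h2 | h2
    · exact absurd h2 (by decide)
    · exact absurd h2 (not_prec21 x y)
  · rfl
  · exact absurd hp (not_prec33 x y)

lemma lastW2x (x y : ℕ) (hxy : x ≠ y) (v' : ℕ) (h : lastWrite (hW x y) 2 x v') : v' = 5 := by
  obtain ⟨i, hi, _⟩ := h
  have h9 : i < 9 := by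
    have := (List.getElem?_eq_some_iff.1 hi).1
    simpa [hW] using this
  interval_cases i <;>
    simp (config := { decide := true }) [hW, hxy, Ne.symm hxy] at hi <;>
    omega

lemma lastW2y (x y : ℕ) (hxy : x ≠ y) (v' : ℕ) (h : lastWrite (hW x y) 2 y v') : v' = 43 := by
  obtain ⟨i, hi, _⟩ := h
  have h9 : i < 9 := by
    have := (List.getElem?_eq_some_iff.1 hi).1
    simpa [hW] using this
  interval_cases i <;>
    simp (config := { decide := true }) [hW, hxy, Ne.symm hxy] at hi <;>
    omega

lemma legalW (x y : ℕ) (hxy : x ≠ y) : vLegal (hW x y) := by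
  intro i t z v hg
  obtain ⟨hi, _⟩ := hg
  have h9 : i < 9 := by
    have := (List.getElem?_eq_some_iff.1 hi).1
    simpa [hW] using this
  interval_cases i <;> simp (config := { decide := true }) [hW] at hi
  · -- i = 6 : rd 3 x 5
    obtain ⟨rfl, rfl, rfl⟩ := hi
    constructor
    · intro t' hmax v' hlw
      have h2 := maxW x y x t' ⟨5, by simp [hW]⟩ hmax
      subst h2
      exact (lastW2x x y hxy v' hlw).symm
    · intro hn
      exact ((hn ⟨2, cmtW2 x y, prec23 x y, ⟨5, by simp [hW]⟩⟩)).elim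
  · -- i = 7 : rd 3 y 43
    obtain ⟨rfl, rfl, rfl⟩ := hi
    constructor
    · intro t' hmax v' hlw
      have h2 := maxW x y y t' ⟨43, by simp [hW]⟩ hmax
      subst h2
      exact (lastW2y x y hxy v' hlw).symm
    · intro hn
      exact ((hn ⟨2, cmtW2 x y, prec23 x y, ⟨43, by simp [hW]⟩⟩)).elim

lemma occ4_cases (x y : ℕ) (t : ℕ+) (h : vOccurs (h4L x y) t) : t = 1 ∨ t = 2 ∨ t = 3 := by
  by_contra hc
  push_neg at hc
  obtain ⟨h1, h2, h3⟩ := hc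
  exact h (by simp [vProj, h4L, VStmt.txn, Ne.symm h1, Ne.symm h2, Ne.symm h3])

lemma equiv4W (x y : ℕ) : valueEquiv (h4L x y) (hW x y) := by
  constructor
  · intro t
    by_cases h1 : t = 1
    · subst h1; simp [vProj, h4L, hW, VStmt.txn]
    by_cases h2 : t = 2
    · subst h2; simp [vProj, h4L, hW, VStmt.txn]
    by_cases h3 : t = 3
    · subst h3; simp [vProj, h4L, hW, VStmt.txn]
    · simp [vProj, h4L, hW, VStmt.txn, Ne.symm h1, Ne.symm h2, Ne.symm h3]
  · intro t1 t2 hne hp _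
    rcases occ4_cases x y t1 hp.1 with rfl | rfl | rfl <;>
      rcases occ4_cases x y t2 hp.2.1 with rfl | rfl | rfl
    · exact absurd rfl hne
    · have := hp.2.2 2 1 (VStmt.wr 1 y 42) (VStmt.wr 2 x 5) rfl rfl rfl rfl
      omega
    · exact prec13 x y
    · have := hp.2.2 3 2 (VStmt.wr 2 y 43) (VStmt.wr 1 y 42) rfl rfl rfl rfl
      omega
    · exact absurd rfl hne
    · have := hp.2.2 6 5 (VStmt.cmt 2) (VStmt.rd 3 x 5) rfl rfl rfl rfl
      omega
    · have := hp.2.2 5 4 (VStmt.rd 3 x 5) (VStmt.cmt 1) rfl rfl rfl rfl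
      omega
    · have := hp.2.2 5 1 (VStmt.rd 3 x 5) (VStmt.wr 2 x 5) rfl rfl rfl rfl
      omega
    · exact absurd rfl hne

-- Conflict-based counterexample part
def G (x y : ℕ) : List Stmt := [Stmt.wr 1 x, Stmt.wr 2 x, Stmt.wr 1 y, Stmt.wr 2 y,
  Stmt.cmt 1, Stmt.rd 3 x, Stmt.cmt 2, Stmt.rd 3 y, Stmt.cmt 3]

lemma conflict56 (x y : ℕ) : conflict (G x y) 5 6 := by
  refine ⟨3, 2, by decide, Or.inl ⟨x, ⟨rfl, ?_⟩, rfl, by simp [writes, G]⟩⟩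
  intro j hj
  interval_cases j <;> simp (config := { decide := true }) [G]

lemma conflict67 (x y : ℕ) : conflict (G x y) 6 7 := by
  refine ⟨3, 2, by decide, Or.inr (Or.inl ⟨y, ⟨rfl, ?_⟩, rfl, by simp [writes, G]⟩)⟩
  intro j hj
  interval_cases j <;> simp (config := { decide := true }) [G]

lemma countG_rd3x (x y : ℕ) (hxy : x ≠ y) : (G x y).count (Stmt.rd 3 x) = 1 := by
  simp (config := { decide := true }) [G, List.count_cons, hxy, Ne.symm hxy]

lemma countG_rd3y (x y : ℕ) (hxy : x ≠ y) : (G x y).count (Stmt.rd 3 y) = 1 := by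
  simp (config := { decide := true }) [G, List.count_cons, hxy, Ne.symm hxy]

lemma countG_cmt2 (x y : ℕ) : (G x y).count (Stmt.cmt 2) = 1 := by
  simp (config := { decide := true }) [G, List.count_cons]

lemma notOpaqueG (x y : ℕ) (hxy : x ≠ y) : ¬ IsOpaque (G x y) := by
  rintro ⟨h', hseq, hperm, hproj, -, hconf⟩
  obtain ⟨i5, hi5⟩ := exists_getElem?' (Stmt.rd 3 x) h' (hperm.mem_iff.1 (by simp [G]))
  obtain ⟨i6, hi6⟩ := exists_getElem?' (Stmt.cmt 2) h' (hperm.mem_iff.1 (by simp [G]))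
  obtain ⟨i7, hi7⟩ := exists_getElem?' (Stmt.rd 3 y) h' (hperm.mem_iff.1 (by simp [G]))
  have c5 : corresponds (G x y) h' 5 i5 :=
    ⟨Stmt.rd 3 x, rfl, hi5, by
      rw [count_take_zero h' i5 _ hi5 (by rw [← hperm.count_eq]; exact countG_rd3x x y hxy)]
      simp (config := { decide := true }) [G, List.count_cons]⟩
  have c6 : corresponds (G x y) h' 6 i6 :=
    ⟨Stmt.cmt 2, rfl, hi6, by
      rw [count_take_zero h' i6 _ hi6 (by rw [← hperm.count_eq]; exact countG_cmt2 x y)]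
      simp (config := { decide := true }) [G, List.count_cons]⟩
  have c7 : corresponds (G x y) h' 7 i7 :=
    ⟨Stmt.rd 3 y, rfl, hi7, by
      rw [count_take_zero h' i7 _ hi7 (by rw [← hperm.count_eq]; exact countG_rd3y x y hxy)]
      simp (config := { decide := true }) [G, List.count_cons, hxy, Ne.symm hxy]⟩
  have o1 : i5 < i6 := hconf 5 6 i5 i6 (by omega) (conflict56 x y) c5 c6
  have o2 : i6 < i7 := hconf 6 7 i6 i7 (by omega) (conflict67 x y) c6 c7
  have occ2 : occurs h' 2 := by
    have hp2 := hproj 2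
    rw [occurs, ← hp2]
    simp [proj, G, Stmt.txn]
  have occ3 : occurs h' 3 := by
    have hp3 := hproj 3
    rw [occurs, ← hp3]
    simp [proj, G, Stmt.txn]
  rcases hseq 2 3 (by decide) occ2 occ3 with hp | hp
  · have := hp.2.2 i6 i5 (Stmt.cmt 2) (Stmt.rd 3 x) hi6 hi5 rfl rfl
    omega
  · have := hp.2.2 i7 i6 (Stmt.rd 3 y) (Stmt.cmt 2) hi7 hi6 rfl rfl
    omega

end H4Aux

/-- The valued history
`h4 = [wr_1(x,5), wr_2(x,5), wr_1(y,42), wr_2(y,43), cmt_1, rd_3(x,5), cmt_2, rd_3(y,43), cmt_3]`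
(for distinct variables `x`, `y`) is value-opaque, witnessed by a sequential legal
history ordering transaction 1 before 2 before 3, but it is not opaque under the
conflict-based definition (after erasing values). -/
theorem h4_value_opaque_not_conflict_opaque (x y : ℕ) (hxy : x ≠ y) :
    let h4 : List VStmt := [VStmt.wr 1 x 5, VStmt.wr 2 x 5, VStmt.wr 1 y 42,
      VStmt.wr 2 y 43, VStmt.cmt 1, VStmt.rd 3 x 5, VStmt.cmt 2,
      VStmt.rd 3 y 43, VStmt.cmt 3]
    ValueOpaque h4 ∧
    (∃ h', vSequential h' ∧ vLegal h' ∧ valueEquiv h4 h' ∧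
       vPrecedes h' 1 2 ∧ vPrecedes h' 2 3 ∧ vPrecedes h' 1 3) ∧
    ¬ IsOpaque (eraseH h4) := by
  intro h4
  refine ⟨⟨H4Aux.hW x y, H4Aux.seqW x y, H4Aux.legalW x y hxy, H4Aux.equiv4W x y⟩,
    ⟨H4Aux.hW x y, H4Aux.seqW x y, H4Aux.legalW x y hxy, H4Aux.equiv4W x y,
      H4Aux.prec12 x y, H4Aux.prec23 x y, H4Aux.prec13 x y⟩, ?_⟩
  have e : eraseH h4 = H4Aux.G x y := rfl
  rw [e]
  exact H4Aux.notOpaqueG x y hxy
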